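/- Let α > −1, M ≥ 1, c_1, ..., c_M ∈ ℝ, μ_1, ..., μ_M ∈ ℝ, ν_1, ..., ν_M ∈ ℕ, and n ≥ 1. Suppose S_n is a real polynomial of degree n with leading coefficient (−1)^n/n! satisfying ⟨S_n, p⟩_S = 0 for every real polynomial p with deg p < n. Then for all x ∈ ℝ, S_n(x) = L_n^α(x) − Σ_{j=1}^M μ_j · S_n^{(ν_j)}(c_j) · (∂^{ν_j}/∂y^{ν_j}) K_{n−1}^α(x, y)|_{y=c_j}. -/

import Mathlib

open Polynomial Finset MeasureTheory Real

/-- The generalized Laguerre polynomial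
`L_n^α(x) = Σ_{k=0}^n (−1)^k ((α+k+1)_{n−k} / ((n−k)!·k!)) x^k`. -/
noncomputable def laguerre (α : ℝ) (n : ℕ) : Polynomial ℝ :=
  ∑ k ∈ Finset.range (n + 1),
    Polynomial.C ((-1 : ℝ) ^ k * (ascPochhammer ℝ (n - k)).eval (α + k + 1) /
      ((n - k).factorial * k.factorial)) * Polynomial.X ^ k

/-- The discrete Sobolev inner product
`⟨f, g⟩_S = ∫_0^∞ f(x) g(x) x^α e^{−x} dx + Σ_{j=1}^M μ_j f^{(ν_j)}(c_j) g^{(ν_j)}(c_j)`. -/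
noncomputable def sobolevInner (α : ℝ) {M : ℕ} (c μ : Fin M → ℝ) (ν : Fin M → ℕ)
    (f g : Polynomial ℝ) : ℝ :=
  (∫ x in Set.Ioi (0 : ℝ), f.eval x * g.eval x * x ^ α * Real.exp (-x)) +
  ∑ j, μ j * (Polynomial.derivative^[ν j] f).eval (c j) *
    (Polynomial.derivative^[ν j] g).eval (c j)


/-- The `n`-th Laguerre reproducing kernel
`K_n^α(x,y) = Σ_{k=0}^n (k!/Γ(α+k+1)) L_k^α(x) L_k^α(y)`. -/
noncomputable def laguerreKernel (α : ℝ) (n : ℕ) (x y : ℝ) : ℝ :=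
  ∑ k ∈ Finset.range (n + 1),
    (k.factorial : ℝ) / Real.Gamma (α + k + 1) * (laguerre α k).eval x * (laguerre α k).eval y

noncomputable def lagI (α : ℝ) (p : Polynomial ℝ) : ℝ :=
  ∫ x in Set.Ioi (0:ℝ), p.eval x * x ^ α * Real.exp (-x)


lemma eval1_of_coeff2 (p : Polynomial ℝ) (h : ∀ m, 2 ≤ m → p.coeff m = 0) :
    p.eval 1 = p.coeff 0 + p.coeff 1 := by
  have hd : p.natDegree < 2 := by
    by_contra h2
    push_neg at h2
    rcases eq_or_ne p 0 with rfl | hp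
    · simp at h2
    · exact hp (leadingCoeff_eq_zero.mp (h _ h2))
  rw [eval_eq_sum_range' hd]
  simp [Finset.sum_range_succ]

lemma delta_coeff (Q : Polynomial ℝ) (m : ℕ) (hQ : ∀ l, m + 2 ≤ l → Q.coeff l = 0) :
    (taylor (1:ℝ) Q - Q).coeff m = (m+1 : ℝ) * Q.coeff (m+1) := by
  rw [coeff_sub, taylor_coeff]
  have h2 : ∀ i, 2 ≤ i → (hasseDeriv m Q).coeff i = 0 := by
    intro i hi
    rw [hasseDeriv_coeff, hQ (i + m) (by omega)]
    ring
  rw [eval1_of_coeff2 _ h2, hasseDeriv_coeff, hasseDeriv_coeff]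
  simp only [Nat.zero_add, Nat.choose_self]
  have h3 : (1 + m).choose m = m + 1 := by
    rw [Nat.add_comm]; exact Nat.choose_succ_self_right m
  rw [h3]
  have h4 : (1 : ℕ) + m = m + 1 := by omega
  rw [h4]
  push_cast
  ring

lemma finite_diff (k : ℕ) (Q : Polynomial ℝ) (hQ : ∀ m, k + 1 ≤ m → Q.coeff m = 0) :
    ∑ i ∈ Finset.range (k+1), (-1:ℝ)^i * (k.choose i) * Q.eval (i:ℝ)
      = (-1)^k * k.factorial * Q.coeff k := by
  induction k generalizing Q with
  | zero => simp [coeff_zero_eq_eval_zero]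
  | succ k ih =>
    set D : Polynomial ℝ := taylor (1:ℝ) Q - Q with hD
    have hDc : ∀ m, k + 1 ≤ m → D.coeff m = 0 := by
      intro m hm
      rw [hD, delta_coeff Q m (fun l hl => hQ l (by omega)), hQ (m+1) (by omega)]
      ring
    have hDe : ∀ i : ℕ, D.eval (i:ℝ) = Q.eval (((i+1:ℕ)):ℝ) - Q.eval (i:ℝ) := by
      intro i
      rw [hD, eval_sub, taylor_apply, eval_comp]
      push_cast
      simp
    have key : ∑ i ∈ Finset.range (k+2), (-1:ℝ)^i * ((k+1).choose i) * Q.eval (i:ℝ)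
        = - ∑ i ∈ Finset.range (k+1), (-1:ℝ)^i * (k.choose i) * D.eval (i:ℝ) := by
      have h1 : ∑ i ∈ Finset.range (k+2), (-1:ℝ)^i * ((k+1).choose i) * Q.eval (i:ℝ)
          = (∑ i ∈ Finset.range (k+1),
              (-1:ℝ)^(i+1) * ((k+1).choose (i+1)) * Q.eval ((i+1:ℕ):ℝ)) + Q.eval 0 := by
        rw [Finset.sum_range_succ' (fun i => (-1:ℝ)^i * ((k+1).choose i) * Q.eval (i:ℝ))]
        norm_num
      have h2 : ∑ i ∈ Finset.range (k+1), (-1:ℝ)^i * ((k).choose i) * Q.eval (i:ℝ)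
          = Q.eval 0 + ∑ i ∈ Finset.range (k+1),
              (-1:ℝ)^(i+1) * ((k).choose (i+1)) * Q.eval ((i+1:ℕ):ℝ) := by
        have e3 : ∑ i ∈ Finset.range (k+2), (-1:ℝ)^i * ((k).choose i) * Q.eval (i:ℝ)
            = ∑ i ∈ Finset.range (k+1), (-1:ℝ)^i * ((k).choose i) * Q.eval (i:ℝ) := by
          rw [Finset.sum_range_succ]
          simp [Nat.choose_succ_self]
        rw [← e3, Finset.sum_range_succ' (fun i => (-1:ℝ)^i * ((k).choose i) * Q.eval (i:ℝ))]
        norm_num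
        ring
      have h3 : ∀ i ∈ Finset.range (k+1),
          (-1:ℝ)^(i+1) * ((k+1).choose (i+1)) * Q.eval ((i+1:ℕ):ℝ)
          = (-1:ℝ)^(i+1) * ((k).choose i) * Q.eval ((i+1:ℕ):ℝ)
            + (-1:ℝ)^(i+1) * ((k).choose (i+1)) * Q.eval ((i+1:ℕ):ℝ) := by
        intro i _
        rw [Nat.choose_succ_succ]
        push_cast
        ring
      rw [h1, Finset.sum_congr rfl h3, Finset.sum_add_distrib]
      have h4 : ∀ i ∈ Finset.range (k+1),
          (-1:ℝ)^i * (k.choose i) * D.eval (i:ℝ)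
          = -((-1:ℝ)^(i+1) * ((k).choose i) * Q.eval ((i+1:ℕ):ℝ))
            - (-1:ℝ)^i * (k.choose i) * Q.eval (i:ℝ) := by
        intro i _
        rw [hDe i]
        push_cast
        ring
      rw [Finset.sum_congr rfl h4, Finset.sum_sub_distrib]
      simp only [Finset.sum_neg_distrib]
      linarith [h2]
    have hcast : ∀ i : ℕ, ((k+1 : ℕ).choose i : ℝ) = (((k+1).choose i : ℕ) : ℝ) := fun i => rfl
    calc ∑ i ∈ Finset.range (k+1+1), (-1:ℝ)^i * ((k+1).choose i) * Q.eval (i:ℝ)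
        = - ∑ i ∈ Finset.range (k+1), (-1:ℝ)^i * (k.choose i) * D.eval (i:ℝ) := key
      _ = -((-1)^k * k.factorial * D.coeff k) := by rw [ih D hDc]
      _ = (-1)^(k+1) * (k+1).factorial * Q.coeff (k+1) := by
          rw [hD, delta_coeff Q k (fun l hl => hQ l (by omega))]
          push_cast [Nat.factorial_succ]
          ring

lemma lag_pos (α : ℝ) (hα : -1 < α) (m : ℕ) : 0 < α + m + 1 := by
  have : (0:ℝ) ≤ m := Nat.cast_nonneg m
  linarith

lemma term_eq (α : ℝ) (m : ℕ) : ∀ x ∈ Set.Ioi (0:ℝ),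
    Real.exp (-x) * x ^ (α + m + 1 - 1) = x ^ (m:ℕ) * x ^ α * Real.exp (-x) := by
  intro x hx
  have hx0 : (0:ℝ) < x := hx
  have h : x ^ (α + m + 1 - 1) = x ^ (m:ℕ) * x ^ α := by
    rw [add_sub_cancel_right, Real.rpow_add hx0, ← Real.rpow_natCast x m]
    ring
  rw [h]; ring

lemma integrable_term (α : ℝ) (hα : -1 < α) (m : ℕ) :
    IntegrableOn (fun x => x ^ (m:ℕ) * x ^ α * Real.exp (-x)) (Set.Ioi (0:ℝ)) := by
  have h := Real.GammaIntegral_convergent (lag_pos α hα m)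
  exact (h.congr_fun (term_eq α m) measurableSet_Ioi)

lemma integral_term (α : ℝ) (hα : -1 < α) (m : ℕ) :
    ∫ x in Set.Ioi (0:ℝ), x ^ (m:ℕ) * x ^ α * Real.exp (-x) = Real.Gamma (α + m + 1) := by
  rw [Real.Gamma_eq_integral (lag_pos α hα m)]
  exact (setIntegral_congr_fun measurableSet_Ioi (term_eq α m)).symm

lemma poly_integrand_eq (α : ℝ) (p : Polynomial ℝ) (x : ℝ) :
    p.eval x * x ^ α * Real.exp (-x)
      = ∑ i ∈ Finset.range (p.natDegree + 1),
          p.coeff i * (x ^ (i:ℕ) * x ^ α * Real.exp (-x)) := by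
  rw [eval_eq_sum_range, Finset.sum_mul, Finset.sum_mul]
  exact Finset.sum_congr rfl (fun i _ => by ring)

lemma integrable_poly (α : ℝ) (hα : -1 < α) (p : Polynomial ℝ) :
    IntegrableOn (fun x => p.eval x * x ^ α * Real.exp (-x)) (Set.Ioi (0:ℝ)) := by
  have : (fun x => p.eval x * x ^ α * Real.exp (-x))
      = fun x => ∑ i ∈ Finset.range (p.natDegree + 1),
          p.coeff i * (x ^ (i:ℕ) * x ^ α * Real.exp (-x)) := by
    funext x; exact poly_integrand_eq α p x
  rw [this]
  exact integrable_finset_sum _ (fun i _ => (integrable_term α hα i).const_mul _)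

lemma lagI_sum (α : ℝ) (hα : -1 < α) {ι : Type*} (s : Finset ι) (f : ι → Polynomial ℝ) :
    lagI α (∑ i ∈ s, f i) = ∑ i ∈ s, lagI α (f i) := by
  unfold lagI
  rw [← integral_finset_sum s (fun i _ => integrable_poly α hα (f i))]
  congr 1
  funext x
  rw [eval_finset_sum, Finset.sum_mul, Finset.sum_mul]

lemma lagI_CXpow (α : ℝ) (hα : -1 < α) (a : ℝ) (m : ℕ) :
    lagI α (Polynomial.C a * Polynomial.X ^ m) = a * Real.Gamma (α + m + 1) := by
  unfold lagI
  have h : ∀ x : ℝ, (Polynomial.C a * Polynomial.X ^ m).eval x * x ^ α * Real.exp (-x)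
      = a * (x ^ (m:ℕ) * x ^ α * Real.exp (-x)) := by
    intro x; simp; ring
  simp_rw [h]
  rw [integral_const_mul, integral_term α hα m]

lemma laguerre_coeff (α : ℝ) (n k : ℕ) :
    (laguerre α n).coeff k = if k ≤ n then
      (-1 : ℝ) ^ k * (ascPochhammer ℝ (n - k)).eval (α + k + 1) /
        ((n - k).factorial * k.factorial) else 0 := by
  unfold laguerre
  rw [finset_sum_coeff]
  simp only [coeff_C_mul, coeff_X_pow, mul_ite, mul_one, mul_zero]
  rw [Finset.sum_ite_eq (Finset.range (n+1)) k]
  simp [Nat.lt_succ_iff]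

lemma laguerre_coeff_self (α : ℝ) (n : ℕ) :
    (laguerre α n).coeff n = (-1 : ℝ) ^ n / n.factorial := by
  rw [laguerre_coeff]
  simp

lemma laguerre_coeff_eq_zero (α : ℝ) {n k : ℕ} (h : n < k) : (laguerre α n).coeff k = 0 := by
  rw [laguerre_coeff]
  simp [Nat.not_le.mpr h]

lemma laguerre_natDegree_le (α : ℝ) (n : ℕ) : (laguerre α n).natDegree ≤ n := by
  unfold laguerre
  apply natDegree_sum_le_of_forall_le
  intro i hi
  refine le_trans (natDegree_C_mul_le _ _) ?_
  simpa [natDegree_X_pow] using Nat.lt_succ_iff.mp (Finset.mem_range.mp hi)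

lemma gamma_asc (s : ℝ) (hs : 0 < s) (j : ℕ) :
    Real.Gamma (s + j) = Real.Gamma s * (ascPochhammer ℝ j).eval s := by
  induction j with
  | zero => simp
  | succ j ih =>
    have h1 : s + (j+1 : ℕ) = (s + j) + 1 := by push_cast; ring
    rw [h1, Real.Gamma_add_one (by positivity), ih, ascPochhammer_succ_right]
    simp [eval_mul]
    ring

lemma lagI_laguerre_Xpow (α : ℝ) (hα : -1 < α) (k j : ℕ) (hjk : j ≤ k) :
    lagI α (laguerre α k * Polynomial.X ^ j)
      = (if j = k then (-1:ℝ)^k * Real.Gamma (α + k + 1) else 0) := by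
  set Q : Polynomial ℝ := (ascPochhammer ℝ j).comp (Polynomial.X + Polynomial.C (α+1)) with hQdef
  have hQmonic : Q.Monic := (monic_ascPochhammer ℝ j).comp_X_add_C _
  have hQdeg : Q.natDegree = j := by
    rw [hQdef, natDegree_comp, ascPochhammer_natDegree, natDegree_X_add_C, mul_one]
  have hQeval : ∀ i : ℕ, Q.eval (i:ℝ) = (ascPochhammer ℝ j).eval (α + i + 1) := by
    intro i
    rw [hQdef, eval_comp]
    norm_num
    ring_nf
  -- expand the product
  have hexp : laguerre α k * Polynomial.X ^ j
      = ∑ i ∈ Finset.range (k+1),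
          Polynomial.C ((-1 : ℝ) ^ i * (ascPochhammer ℝ (k - i)).eval (α + i + 1) /
            ((k - i).factorial * i.factorial)) * Polynomial.X ^ (i + j) := by
    unfold laguerre
    rw [Finset.sum_mul]
    exact Finset.sum_congr rfl (fun i _ => by rw [mul_assoc, ← pow_add])
  have hGamne : ∀ m : ℕ, Real.Gamma (α + m + 1) ≠ 0 :=
    fun m => (Real.Gamma_pos_of_pos (lag_pos α hα m)).ne'
  have hmaster : lagI α (laguerre α k * Polynomial.X ^ j)
      = Real.Gamma (α + k + 1) / k.factorial *
          ∑ i ∈ Finset.range (k+1), (-1:ℝ)^i * (k.choose i) * Q.eval (i:ℝ) := by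
    rw [hexp, lagI_sum α hα, Finset.mul_sum]
    refine Finset.sum_congr rfl (fun i hi => ?_)
    have hik : i ≤ k := Nat.lt_succ_iff.mp (Finset.mem_range.mp hi)
    rw [lagI_CXpow α hα, hQeval]
    have hc1 : α + ((i + j : ℕ) : ℝ) + 1 = (α + i + 1) + (j:ℕ) := by push_cast; ring
    have hc2 : (α + i + 1) + ((k - i : ℕ) : ℝ) = α + k + 1 := by
      rw [Nat.cast_sub hik]; ring
    have hg1 : Real.Gamma (α + ((i + j : ℕ) : ℝ) + 1)
        = Real.Gamma (α + i + 1) * (ascPochhammer ℝ j).eval (α + i + 1) := by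
      rw [hc1, gamma_asc _ (lag_pos α hα i)]
    have hg2' : Real.Gamma (α + i + 1) * (ascPochhammer ℝ (k - i)).eval (α + i + 1)
        = Real.Gamma (α + k + 1) := by
      have h := gamma_asc (α + i + 1) (lag_pos α hα i) (k - i)
      rw [hc2] at h
      exact h.symm
    have hchoose : (k.choose i : ℝ) * (i.factorial : ℝ) * ((k - i).factorial : ℝ)
        = (k.factorial : ℝ) := by
      exact_mod_cast congrArg (Nat.cast (R := ℝ))
        (Nat.choose_mul_factorial_mul_factorial hik)
    have hfi : (i.factorial : ℝ) ≠ 0 := Nat.cast_ne_zero.mpr (Nat.factorial_ne_zero i)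
    have hfki : ((k - i).factorial : ℝ) ≠ 0 := Nat.cast_ne_zero.mpr (Nat.factorial_ne_zero _)
    have hfk : (k.factorial : ℝ) ≠ 0 := Nat.cast_ne_zero.mpr (Nat.factorial_ne_zero k)
    rw [hg1, div_mul_eq_mul_div, div_mul_eq_mul_div,
      div_eq_div_iff (mul_ne_zero hfki hfi) hfk]
    linear_combination
      (-(((-1:ℝ)^i) * (ascPochhammer ℝ j).eval (α + i + 1) *
          (ascPochhammer ℝ (k - i)).eval (α + i + 1) * Real.Gamma (α + i + 1))) * hchoose
      + (((-1:ℝ)^i) * (ascPochhammer ℝ j).eval (α + i + 1) * (k.choose i : ℝ) *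
          (i.factorial : ℝ) * ((k - i).factorial : ℝ)) * hg2'
  rw [hmaster, finite_diff k Q (fun m hm => by
    apply coeff_eq_zero_of_natDegree_lt
    omega)]
  rcases eq_or_lt_of_le hjk with rfl | hlt
  · have : Q.coeff j = 1 := by
      have := hQmonic.leadingCoeff
      rwa [Polynomial.leadingCoeff, hQdeg] at this
    rw [if_pos rfl, this]
    field_simp [Nat.cast_ne_zero.mpr (Nat.factorial_ne_zero j)]
  · have : Q.coeff k = 0 := coeff_eq_zero_of_natDegree_lt (by omega)
    rw [this, if_neg (by omega)]
    ring

lemma lagI_Cmul (α : ℝ) (a : ℝ) (p : Polynomial ℝ) :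
    lagI α (Polynomial.C a * p) = a * lagI α p := by
  unfold lagI
  rw [← integral_const_mul]
  congr 1
  funext x
  simp
  ring

lemma lagI_add (α : ℝ) (hα : -1 < α) (p q : Polynomial ℝ) :
    lagI α (p + q) = lagI α p + lagI α q := by
  unfold lagI
  rw [← integral_add (integrable_poly α hα p) (integrable_poly α hα q)]
  congr 1
  funext x
  simp
  ring

lemma lagI_sub (α : ℝ) (hα : -1 < α) (p q : Polynomial ℝ) :
    lagI α (p - q) = lagI α p - lagI α q := by
  unfold lagI
  rw [← integral_sub (integrable_poly α hα p) (integrable_poly α hα q)]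
  congr 1
  funext x
  simp
  ring

lemma neg_one_pow_mul_fact (N : ℕ) :
    ((-1:ℝ)^N * N.factorial) * ((-1:ℝ)^N / N.factorial) = 1 := by
  have h1 : ((-1:ℝ)^N) * ((-1:ℝ)^N) = 1 := by
    rw [← mul_pow]; norm_num
  have h2 : (N.factorial : ℝ) ≠ 0 := Nat.cast_ne_zero.mpr (Nat.factorial_ne_zero N)
  field_simp
  linear_combination h1

lemma laguerre_rep (α : ℝ) :
    ∀ N (p : Polynomial ℝ), p.degree < (N : ℕ) →
      ∃ b : ℕ → ℝ, p = ∑ k ∈ Finset.range N, Polynomial.C (b k) * laguerre α k := by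
  intro N
  induction N with
  | zero =>
    intro p hp
    refine ⟨0, ?_⟩
    have : p = 0 := by
      rw [← degree_eq_bot]
      exact Nat.WithBot.lt_zero_iff.mp (by exact_mod_cast hp)
    simp [this]
  | succ N ih =>
    intro p hp
    set a := p.coeff N * ((-1:ℝ)^N * N.factorial) with ha
    set q := p - Polynomial.C a * laguerre α N with hq
    have hq_hi : ∀ m, N ≤ m → q.coeff m = 0 := by
      intro m hm
      rcases eq_or_lt_of_le hm with rfl | hlt
      · rw [hq, coeff_sub, coeff_C_mul, laguerre_coeff_self, ha]
        rw [mul_assoc, neg_one_pow_mul_fact]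
        ring
      · have hpm : p.coeff m = 0 := by
          apply coeff_eq_zero_of_degree_lt
          exact lt_of_lt_of_le hp (by exact_mod_cast hlt)
        rw [hq, coeff_sub, coeff_C_mul, laguerre_coeff_eq_zero α hlt, hpm]
        ring
    have hqdeg : q.degree < (N : ℕ) := (degree_lt_iff_coeff_zero _ _).mpr
      (fun m hm => hq_hi m (by exact_mod_cast hm))
    obtain ⟨b, hb⟩ := ih q hqdeg
    refine ⟨Function.update b N a, ?_⟩
    rw [Finset.sum_range_succ]
    have hss : ∑ k ∈ Finset.range N, Polynomial.C (Function.update b N a k) * laguerre α k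
        = ∑ k ∈ Finset.range N, Polynomial.C (b k) * laguerre α k := by
      refine Finset.sum_congr rfl (fun k hk => ?_)
      rw [Function.update_of_ne (Nat.ne_of_lt (Finset.mem_range.mp hk))]
    rw [hss, Function.update_self, ← hb, hq]
    ring

lemma laguerre_expand (α : ℝ) (k : ℕ) (p : Polynomial ℝ) :
    p * laguerre α k = ∑ i ∈ Finset.range (k+1),
      Polynomial.C ((-1 : ℝ) ^ i * (ascPochhammer ℝ (k - i)).eval (α + i + 1) /
        ((k - i).factorial * i.factorial)) * (p * Polynomial.X ^ i) := by
  conv_lhs => rw [laguerre]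
  rw [Finset.mul_sum]
  exact Finset.sum_congr rfl (fun i _ => by ring)

lemma lagI_laguerre_laguerre (α : ℝ) (hα : -1 < α) (l k : ℕ) :
    lagI α (laguerre α l * laguerre α k)
      = if l = k then Real.Gamma (α + k + 1) / k.factorial else 0 := by
  -- reduce to the case l ≥ k by symmetry? handle directly: expand laguerre l if l ≤ k, else laguerre k
  rcases le_total l k with h | h
  · rw [mul_comm, laguerre_expand, lagI_sum α hα]
    have heval : ∀ i ∈ Finset.range (l+1),
        lagI α (Polynomial.C ((-1 : ℝ) ^ i * (ascPochhammer ℝ (l - i)).eval (α + i + 1) /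
          ((l - i).factorial * i.factorial)) * (laguerre α k * Polynomial.X ^ i))
        = ((-1 : ℝ) ^ i * (ascPochhammer ℝ (l - i)).eval (α + i + 1) /
            ((l - i).factorial * i.factorial)) *
          (if i = k then (-1:ℝ)^k * Real.Gamma (α + k + 1) else 0) := by
      intro i hi
      rw [lagI_Cmul, lagI_laguerre_Xpow α hα k i (le_trans (Nat.lt_succ_iff.mp (Finset.mem_range.mp hi)) h)]
    rw [Finset.sum_congr rfl heval]
    simp only [mul_ite, mul_zero]
    rw [Finset.sum_ite_eq' (Finset.range (l+1)) k]
    rcases eq_or_lt_of_le h with rfl | hlt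
    · simp [Nat.lt_succ_iff, Nat.sub_self]
      have h2 : (l.factorial : ℝ) ≠ 0 := Nat.cast_ne_zero.mpr (Nat.factorial_ne_zero l)
      have h1 : ((-1:ℝ)^l) * ((-1:ℝ)^l) = 1 := by rw [← mul_pow]; norm_num
      field_simp
      linear_combination Real.Gamma (α + l + 1) * h1
    · have hk : k ∉ Finset.range (l+1) := by simp [Nat.lt_succ_iff]; omega
      rw [if_neg hk, if_neg (by omega)]
  · rw [laguerre_expand, lagI_sum α hα]
    have heval : ∀ i ∈ Finset.range (k+1),
        lagI α (Polynomial.C ((-1 : ℝ) ^ i * (ascPochhammer ℝ (k - i)).eval (α + i + 1) /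
          ((k - i).factorial * i.factorial)) * (laguerre α l * Polynomial.X ^ i))
        = ((-1 : ℝ) ^ i * (ascPochhammer ℝ (k - i)).eval (α + i + 1) /
            ((k - i).factorial * i.factorial)) *
          (if i = l then (-1:ℝ)^l * Real.Gamma (α + l + 1) else 0) := by
      intro i hi
      rw [lagI_Cmul, lagI_laguerre_Xpow α hα l i (le_trans (Nat.lt_succ_iff.mp (Finset.mem_range.mp hi)) h)]
    rw [Finset.sum_congr rfl heval]
    simp only [mul_ite, mul_zero]
    rw [Finset.sum_ite_eq' (Finset.range (k+1)) l]
    rcases eq_or_lt_of_le h with rfl | hlt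
    · simp [Nat.lt_succ_iff, Nat.sub_self]
      have h2 : (k.factorial : ℝ) ≠ 0 := Nat.cast_ne_zero.mpr (Nat.factorial_ne_zero k)
      have h1 : ((-1:ℝ)^k) * ((-1:ℝ)^k) = 1 := by rw [← mul_pow]; norm_num
      field_simp
      linear_combination Real.Gamma (α + k + 1) * h1
    · have hk : l ∉ Finset.range (k+1) := by simp [Nat.lt_succ_iff]; omega
      rw [if_neg hk, if_neg (by omega)]

lemma zero_of_orth (α : ℝ) (hα : -1 < α) (n : ℕ) (T : Polynomial ℝ)
    (hdeg : T.degree < (n : ℕ))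
    (h : ∀ m, m < n → lagI α (T * Polynomial.X ^ m) = 0) : T = 0 := by
  obtain ⟨b, hb⟩ := laguerre_rep α n T hdeg
  have hbz : ∀ k, k < n → b k = 0 := by
    intro k hk
    have hΓ : Real.Gamma (α+k+1) / k.factorial ≠ 0 :=
      div_ne_zero (Real.Gamma_pos_of_pos (lag_pos α hα k)).ne'
        (Nat.cast_ne_zero.mpr (Nat.factorial_ne_zero k))
    have way1 : lagI α (T * laguerre α k) = 0 := by
      rw [laguerre_expand, lagI_sum α hα]
      apply Finset.sum_eq_zero
      intro i hi
      rw [lagI_Cmul, h i (lt_of_le_of_lt (Nat.lt_succ_iff.mp (Finset.mem_range.mp hi)) hk),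
        mul_zero]
    have way2 : lagI α (T * laguerre α k)
        = b k * (Real.Gamma (α+k+1) / k.factorial) := by
      conv_lhs => rw [hb]
      rw [Finset.sum_mul]
      have h1 : ∀ l ∈ Finset.range n, (Polynomial.C (b l) * laguerre α l) * laguerre α k
          = Polynomial.C (b l) * (laguerre α l * laguerre α k) := fun l _ => by ring
      rw [Finset.sum_congr rfl h1, lagI_sum α hα]
      have h2 : ∀ l ∈ Finset.range n,
          lagI α (Polynomial.C (b l) * (laguerre α l * laguerre α k))
          = if l = k then b l * (Real.Gamma (α+k+1) / k.factorial) else 0 := by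
        intro l _
        rw [lagI_Cmul, lagI_laguerre_laguerre α hα l k]
        split_ifs <;> simp
      rw [Finset.sum_congr rfl h2, Finset.sum_ite_eq' (Finset.range n) k,
        if_pos (Finset.mem_range.mpr hk)]
    exact (mul_eq_zero.mp (way2.symm.trans way1)).resolve_right hΓ
  rw [hb]
  apply Finset.sum_eq_zero
  intro k hk
  rw [hbz k (Finset.mem_range.mp hk)]
  simp

lemma poly_iteratedDeriv (m : ℕ) (p : Polynomial ℝ) (y : ℝ) :
    iteratedDeriv m (fun t => p.eval t) y = (Polynomial.derivative^[m] p).eval y := by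
  induction m generalizing p with
  | zero => simp
  | succ m ih =>
    rw [iteratedDeriv_succ']
    have hd : deriv (fun t => p.eval t) = fun t => (Polynomial.derivative p).eval t := by
      funext t; exact Polynomial.deriv (p := p)
    rw [hd, ih (Polynomial.derivative p), ← Function.iterate_succ_apply]

theorem sobolev_connection_formula_kernel (α : ℝ) (hα : -1 < α) (M : ℕ) (hM : 1 ≤ M)
    (c : Fin M → ℝ) (μ : Fin M → ℝ) (ν : Fin M → ℕ) (n : ℕ) (hn : 1 ≤ n)
    (S : Polynomial ℝ) (hdeg : S.natDegree = n)
    (hlead : S.leadingCoeff = (-1) ^ n / n.factorial)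
    (horth : ∀ p : Polynomial ℝ, p.degree < n → sobolevInner α c μ ν S p = 0) (x : ℝ) :
    S.eval x = (laguerre α n).eval x -
      ∑ j, μ j * (Polynomial.derivative^[ν j] S).eval (c j) *
        iteratedDeriv (ν j) (fun y => laguerreKernel α (n - 1) x y) (c j) := by
  have hn1 : n - 1 + 1 = n := Nat.succ_pred_eq_of_pos hn
  set R : Fin M → Polynomial ℝ := fun j => ∑ k ∈ Finset.range n,
    Polynomial.C ((k.factorial : ℝ) / Real.Gamma (α+k+1) *
      (Polynomial.derivative^[ν j] (laguerre α k)).eval (c j)) * laguerre α k with hR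
  have hker : ∀ j, iteratedDeriv (ν j) (fun y => laguerreKernel α (n-1) x y) (c j)
      = (R j).eval x := by
    intro j
    have hfun : (fun y => laguerreKernel α (n-1) x y)
        = fun y => (∑ k ∈ Finset.range n,
            Polynomial.C ((k.factorial : ℝ) / Real.Gamma (α+k+1) *
              (laguerre α k).eval x) * laguerre α k).eval y := by
      funext y
      rw [laguerreKernel, hn1, eval_finset_sum]
      exact Finset.sum_congr rfl (fun k _ => by simp)
    rw [hfun, poly_iteratedDeriv, iterate_derivative_sum, eval_finset_sum, hR,
      eval_finset_sum]
    refine Finset.sum_congr rfl (fun k _ => ?_)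
    rw [iterate_derivative_C_mul]
    simp
    ring
  have hSm : ∀ m, m < n → lagI α (S * Polynomial.X ^ m)
      = - ∑ j, μ j * (Polynomial.derivative^[ν j] S).eval (c j) *
          (Polynomial.derivative^[ν j] (Polynomial.X ^ m : Polynomial ℝ)).eval (c j) := by
    intro m hm
    have h0 := horth (Polynomial.X ^ m) (by rw [degree_X_pow]; exact_mod_cast hm)
    unfold sobolevInner at h0
    have hint : (∫ t in Set.Ioi (0:ℝ),
        S.eval t * (Polynomial.X^m : Polynomial ℝ).eval t * t ^ α * Real.exp (-t))
        = lagI α (S * Polynomial.X^m) := by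
      unfold lagI; congr 1; funext t; rw [eval_mul]
    rw [hint] at h0
    linarith [h0]
  have hrep : ∀ m, m < n → ∀ j, lagI α (R j * Polynomial.X ^ m)
      = (Polynomial.derivative^[ν j] (Polynomial.X ^ m : Polynomial ℝ)).eval (c j) := by
    intro m hm j
    obtain ⟨b, hb⟩ := laguerre_rep α n (Polynomial.X ^ m)
      (by rw [degree_X_pow]; exact_mod_cast hm)
    have hLX : ∀ k, k < n → lagI α (laguerre α k * Polynomial.X ^ m)
        = b k * (Real.Gamma (α+k+1) / k.factorial) := by
      intro k hk
      conv_lhs => rw [hb]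
      rw [Finset.mul_sum]
      have h1 : ∀ l ∈ Finset.range n, laguerre α k * (Polynomial.C (b l) * laguerre α l)
          = Polynomial.C (b l) * (laguerre α l * laguerre α k) := fun l _ => by ring
      rw [Finset.sum_congr rfl h1, lagI_sum α hα]
      have h2 : ∀ l ∈ Finset.range n,
          lagI α (Polynomial.C (b l) * (laguerre α l * laguerre α k))
          = if l = k then b l * (Real.Gamma (α+k+1) / k.factorial) else 0 := by
        intro l _
        rw [lagI_Cmul, lagI_laguerre_laguerre α hα l k]
        split_ifs <;> simp
      rw [Finset.sum_congr rfl h2, Finset.sum_ite_eq' (Finset.range n) k,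
        if_pos (Finset.mem_range.mpr hk)]
    have hexp2 : R j * Polynomial.X ^ m = ∑ k ∈ Finset.range n,
        Polynomial.C ((k.factorial : ℝ) / Real.Gamma (α+k+1) *
          (Polynomial.derivative^[ν j] (laguerre α k)).eval (c j)) *
          (laguerre α k * Polynomial.X ^ m) := by
      rw [hR]
      rw [Finset.sum_mul]
      exact Finset.sum_congr rfl (fun k _ => by ring)
    rw [hexp2, lagI_sum α hα]
    have h3 : ∀ k ∈ Finset.range n,
        lagI α (Polynomial.C ((k.factorial : ℝ) / Real.Gamma (α+k+1) *
          (Polynomial.derivative^[ν j] (laguerre α k)).eval (c j)) *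
          (laguerre α k * Polynomial.X ^ m))
        = b k * (Polynomial.derivative^[ν j] (laguerre α k)).eval (c j) := by
      intro k hk
      rw [lagI_Cmul, hLX k (Finset.mem_range.mp hk)]
      have hΓ : Real.Gamma (α+k+1) ≠ 0 := (Real.Gamma_pos_of_pos (lag_pos α hα k)).ne'
      have hf : (k.factorial : ℝ) ≠ 0 := Nat.cast_ne_zero.mpr (Nat.factorial_ne_zero k)
      field_simp
    rw [Finset.sum_congr rfl h3]
    conv_rhs => rw [hb]
    rw [iterate_derivative_sum, eval_finset_sum]
    refine Finset.sum_congr rfl (fun k _ => ?_)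
    rw [iterate_derivative_C_mul]
    simp
  set T : Polynomial ℝ := S - laguerre α n + ∑ j, Polynomial.C (μ j *
    (Polynomial.derivative^[ν j] S).eval (c j)) * R j with hT
  have hTdeg : T.degree < (n : ℕ) := by
    rw [degree_lt_iff_coeff_zero]
    intro m hm
    rw [hT, coeff_add, coeff_sub, finset_sum_coeff]
    have hS : S.coeff m - (laguerre α n).coeff m = 0 := by
      rcases eq_or_lt_of_le hm with heq | hlt
      · have hSc : S.coeff n = (-1:ℝ)^n / n.factorial := by
          rw [← hlead, Polynomial.leadingCoeff, hdeg]
        rw [← heq, hSc, laguerre_coeff_self]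
        ring
      · rw [Polynomial.coeff_eq_zero_of_natDegree_lt (by omega),
          laguerre_coeff_eq_zero α hlt]
        ring
    have hRs : ∀ j ∈ Finset.univ, (Polynomial.C (μ j *
        (Polynomial.derivative^[ν j] S).eval (c j)) * R j).coeff m = 0 := by
      intro j _
      rw [coeff_C_mul, hR]
      simp only
      rw [finset_sum_coeff]
      have h4 : ∀ k ∈ Finset.range n, (Polynomial.C ((k.factorial : ℝ) / Real.Gamma (α+k+1) *
          (Polynomial.derivative^[ν j] (laguerre α k)).eval (c j)) * laguerre α k).coeff m
          = 0 := by
        intro k hk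
        rw [coeff_C_mul,
          laguerre_coeff_eq_zero α (lt_of_lt_of_le (Finset.mem_range.mp hk) hm), mul_zero]
      rw [Finset.sum_eq_zero h4, mul_zero]
    rw [Finset.sum_eq_zero hRs, hS]
    ring
  have hTorth : ∀ m, m < n → lagI α (T * Polynomial.X ^ m) = 0 := by
    intro m hm
    have hexp3 : T * Polynomial.X ^ m
        = (S * Polynomial.X ^ m - laguerre α n * Polynomial.X ^ m)
          + ∑ j, Polynomial.C (μ j * (Polynomial.derivative^[ν j] S).eval (c j)) *
              (R j * Polynomial.X ^ m) := by
      rw [hT, add_mul, sub_mul, Finset.sum_mul]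
      congr 1
      exact Finset.sum_congr rfl (fun j _ => by ring)
    rw [hexp3, lagI_add α hα, lagI_sub α hα, lagI_sum α hα, hSm m hm,
      lagI_laguerre_Xpow α hα n m (le_of_lt hm), if_neg (by omega)]
    have h5 : ∀ j ∈ Finset.univ,
        lagI α (Polynomial.C (μ j * (Polynomial.derivative^[ν j] S).eval (c j)) *
          (R j * Polynomial.X ^ m))
        = μ j * (Polynomial.derivative^[ν j] S).eval (c j) *
            (Polynomial.derivative^[ν j] (Polynomial.X ^ m : Polynomial ℝ)).eval (c j) := by
      intro j _
      rw [lagI_Cmul, hrep m hm j]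
    rw [Finset.sum_congr rfl h5]
    ring
  have hT0 : T = 0 := zero_of_orth α hα n T hTdeg hTorth
  have hev : T.eval x = 0 := by rw [hT0]; simp
  rw [hT] at hev
  simp only [eval_add, eval_sub, eval_finset_sum, eval_mul, eval_C] at hev
  simp only [hker]
  linarith [hev]
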